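/- Let E be a real inner product space, X ⊆ E a nonempty convex set, d : E → ℝ a convex Fréchet-differentiable function with Bregman divergence V(y,x) := d(y) − d(x) − ⟨∇d(x), y − x⟩ (so V ≥ 0), and g : E → E a monotone operator on X (⟨g(x) − g(y), x − y⟩ ≥ 0 for all x, y ∈ X). Let x* ∈ X, L > 0, N ≥ 1, and let (z_k)_{k=0}^{N}, (w_k)_{k=0}^{N−1} in X and positive reals (L_k)_{k=1}^{N} with L_{k+1} ≤ 2L satisfy, for every 0 ≤ k ≤ N−1, the per-iteration inequality −⟨g(w_k), x* − w_k⟩ ≤ L_{k+1}·( V(x*, z_k) − V(x*, z_{k+1}) ). Set S_N := Σ_{k=0}^{N−1} 1/L_{k+1} and let ŵ_N := (1/S_N)·Σ_{k=0}^{N−1} (1/L_{k+1})·w_k be the weighted average of the points w_k. Then ⟨g(x*), ŵ_N − x*⟩ ≤ −(1/S_N)·Σ_{k=0}^{N−1} (1/L_{k+1})·⟨g(w_k), x* − w_k⟩ ≤ V(x*, z_0)/S_N ≤ 2L·V(x*, z_0)/N. -/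

import Mathlib

open scoped RealInnerProductSpace
open Finset

lemma bregman_nonneg {E : Type*} [NormedAddCommGroup E] [InnerProductSpace ℝ E] [CompleteSpace E]
    (d : E → ℝ) (hdconv : ConvexOn ℝ Set.univ d)
    (Dd : E → E) (hd : ∀ x, HasGradientAt d (Dd x) x) (y x : E) :
    ⟪Dd x, y - x⟫ ≤ d y - d x := by
  set v := y - x with hv
  set φ : ℝ → ℝ := fun t => d (x + t • v) with hφ
  have hderiv : HasDerivAt φ ⟪Dd x, v⟫ 0 := by
    have hc : HasDerivAt (fun t : ℝ => x + t • v) v 0 := by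
      simpa using ((hasDerivAt_id (0:ℝ)).smul_const v).const_add x
    have hdx : HasFDerivAt d ((InnerProductSpace.toDual ℝ E) (Dd x)) (x + (0:ℝ) • v) := by
      simpa using (hd x).hasFDerivAt
    have := hdx.comp_hasDerivAt 0 hc
    simpa [hφ, Function.comp_def] using this
  have hslope : Filter.Tendsto (slope φ 0) (nhdsWithin 0 (Set.Ioi 0)) (nhds ⟪Dd x, v⟫) :=
    (hasDerivAt_iff_tendsto_slope.mp hderiv).mono_left
      (nhdsWithin_mono 0 (fun t ht => ne_of_gt ht))
  have hbound : ∀ᶠ t in nhdsWithin (0:ℝ) (Set.Ioi 0), slope φ 0 t ≤ d y - d x := by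
    filter_upwards [Ioo_mem_nhdsGT_of_mem (by norm_num : (0:ℝ) ∈ Set.Ico 0 1)] with t ht
    have ht0 : 0 < t := ht.1
    have hcvx := hdconv.2 (Set.mem_univ x) (Set.mem_univ y)
      (by linarith [ht.2] : (0:ℝ) ≤ 1 - t) (le_of_lt ht0) (by ring)
    have heq : (1 - t) • x + t • y = x + t • v := by
      simp [hv, smul_sub, sub_smul]; abel
    rw [heq, smul_eq_mul, smul_eq_mul] at hcvx
    have h2 : φ t - φ 0 ≤ t * (d y - d x) := by
      simp only [hφ, zero_smul, add_zero]
      nlinarith [hcvx]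
    rw [slope_def_field, sub_zero, div_le_iff₀ ht0]
    nlinarith [h2]
  have := le_of_tendsto hslope hbound
  simpa [hv] using this

/-- Theorem 1: convergence rate of the Universal Mirror Prox (exact line search,
adaptive constants bounded by 2L), with output the weighted average of the w_k. -/
theorem universal_mirror_prox_rate
    {E : Type*} [NormedAddCommGroup E] [InnerProductSpace ℝ E] [CompleteSpace E]
    (X : Set E) (hXne : X.Nonempty) (hXconv : Convex ℝ X)
    (d : E → ℝ) (hdconv : ConvexOn ℝ Set.univ d)
    (Dd : E → E) (hd : ∀ x, HasGradientAt d (Dd x) x)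
    (V : E → E → ℝ) (hV : ∀ y x, V y x = d y - d x - ⟪Dd x, y - x⟫)
    (g : E → E) (hmono : ∀ x ∈ X, ∀ y ∈ X, 0 ≤ ⟪g x - g y, x - y⟫)
    (xs : E) (hxs : xs ∈ X)
    (Lb : ℝ) (hLb : 0 < Lb) (N : ℕ) (hN : 1 ≤ N)
    (z w : ℕ → E) (hzX : ∀ k ≤ N, z k ∈ X) (hwX : ∀ k < N, w k ∈ X)
    (L : ℕ → ℝ) (hLpos : ∀ k < N, 0 < L (k + 1)) (hLle : ∀ k < N, L (k + 1) ≤ 2 * Lb)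
    (hiter : ∀ k < N,
      -⟪g (w k), xs - w k⟫ ≤ L (k + 1) * (V xs (z k) - V xs (z (k + 1))))
    (S : ℝ) (hS : S = ∑ k ∈ range N, 1 / L (k + 1))
    (wh : E) (hwh : wh = (1 / S) • ∑ k ∈ range N, (1 / L (k + 1)) • w k) :
    ⟪g xs, wh - xs⟫ ≤
        -(1 / S) * ∑ k ∈ range N, (1 / L (k + 1)) * ⟪g (w k), xs - w k⟫ ∧
      -(1 / S) * ∑ k ∈ range N, (1 / L (k + 1)) * ⟪g (w k), xs - w k⟫ ≤
        V xs (z 0) / S ∧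
      V xs (z 0) / S ≤ 2 * Lb * V xs (z 0) / N := by
  have hVnn : ∀ u, 0 ≤ V xs u := fun u => by
    rw [hV]; linarith [bregman_nonneg d hdconv Dd hd xs u]
  have hNpos : (0:ℝ) < N := by exact_mod_cast hN
  have hSpos : 0 < S := by
    rw [hS]
    refine Finset.sum_pos (fun k hk => one_div_pos.mpr (hLpos k (mem_range.mp hk))) ?_
    exact Finset.nonempty_range_iff.mpr (by omega)
  have hSinv : 0 ≤ 1 / S := by positivity
  -- the negated sum rewriting
  have hneg : -(1 / S) * ∑ k ∈ range N, (1 / L (k + 1)) * ⟪g (w k), xs - w k⟫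
      = (1 / S) * ∑ k ∈ range N, (1 / L (k + 1)) * (-⟪g (w k), xs - w k⟫) := by
    have h : ∑ k ∈ range N, (1 / L (k + 1)) * (-⟪g (w k), xs - w k⟫)
        = -∑ k ∈ range N, (1 / L (k + 1)) * ⟪g (w k), xs - w k⟫ := by
      simp [mul_neg]
    rw [h]; ring
  constructor
  · -- first inequality
    have hws : wh - xs = (1 / S) • ∑ k ∈ range N, (1 / L (k + 1)) • (w k - xs) := by
      have h1 : ∑ k ∈ range N, (1 / L (k + 1)) • (w k - xs)
          = (∑ k ∈ range N, (1 / L (k + 1)) • w k) - S • xs := by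
        simp [smul_sub, Finset.sum_sub_distrib, ← Finset.sum_smul, hS]
      rw [hwh, h1, smul_sub, smul_smul, one_div, inv_mul_cancel₀ hSpos.ne', one_smul]
    have heq : ⟪g xs, wh - xs⟫
        = (1 / S) * ∑ k ∈ range N, (1 / L (k + 1)) * ⟪g xs, w k - xs⟫ := by
      rw [hws, real_inner_smul_right, inner_sum]
      congr 1
      exact Finset.sum_congr rfl fun k _ => real_inner_smul_right _ _ _
    rw [heq, hneg]
    refine mul_le_mul_of_nonneg_left (Finset.sum_le_sum fun k hk => ?_) hSinv
    have hk' := mem_range.mp hk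
    have ha : (0:ℝ) ≤ 1 / L (k + 1) := le_of_lt (one_div_pos.mpr (hLpos k hk'))
    refine mul_le_mul_of_nonneg_left ?_ ha
    have hm := hmono (w k) (hwX k hk') xs hxs
    rw [inner_sub_left] at hm
    have h2 : -⟪g (w k), xs - w k⟫ = ⟪g (w k), w k - xs⟫ := by
      rw [show xs - w k = -(w k - xs) by abel, inner_neg_right]; ring
    linarith
  constructor
  · -- second inequality
    rw [hneg]
    have hsum : ∑ k ∈ range N, (1 / L (k + 1)) * (-⟪g (w k), xs - w k⟫)
        ≤ V xs (z 0) - V xs (z N) := by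
      rw [← Finset.sum_range_sub' (fun k => V xs (z k)) N]
      refine Finset.sum_le_sum fun k hk => ?_
      have hk' := mem_range.mp hk
      have hL := hLpos k hk'
      have := mul_le_mul_of_nonneg_left (hiter k hk') (le_of_lt (one_div_pos.mpr hL))
      calc (1 / L (k + 1)) * (-⟪g (w k), xs - w k⟫)
          ≤ (1 / L (k + 1)) * (L (k + 1) * (V xs (z k) - V xs (z (k + 1)))) := this
        _ = V xs (z k) - V xs (z (k + 1)) := by
            field_simp
    calc (1 / S) * ∑ k ∈ range N, (1 / L (k + 1)) * (-⟪g (w k), xs - w k⟫)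
        ≤ (1 / S) * (V xs (z 0) - V xs (z N)) := mul_le_mul_of_nonneg_left hsum hSinv
      _ ≤ (1 / S) * V xs (z 0) := by
          have := hVnn (z N); nlinarith
      _ = V xs (z 0) / S := by ring
  · -- third inequality
    have hlow : (N:ℝ) / (2 * Lb) ≤ S := by
      rw [hS]
      calc (N:ℝ) / (2 * Lb) = ∑ _k ∈ range N, 1 / (2 * Lb) := by
            rw [Finset.sum_const, card_range, nsmul_eq_mul]; ring
        _ ≤ ∑ k ∈ range N, 1 / L (k + 1) :=
            Finset.sum_le_sum fun k hk =>
              one_div_le_one_div_of_le (hLpos k (mem_range.mp hk)) (hLle k (mem_range.mp hk))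
    have hlowpos : 0 < (N:ℝ) / (2 * Lb) := by positivity
    calc V xs (z 0) / S ≤ V xs (z 0) / ((N:ℝ) / (2 * Lb)) :=
          div_le_div_of_nonneg_left (hVnn (z 0)) hlowpos hlow
      _ = 2 * Lb * V xs (z 0) / N := by
          field_simp
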